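/- Let f : ℝⁿ → ℝ be M_f-self-concordant-like. For any x, y in the domain of f, with r := M_f‖y − x‖₂, the inequality e^{−r/2}·‖y − x‖_x ≤ ‖y − x‖_y ≤ e^{r/2}·‖y − x‖_x holds, where ‖u‖_z := ⟨∇²f(z)u, u⟩^{1/2}. -/

import Mathlib

open scoped RealInnerProductSpace

/-- A convex `C³` function `f` is `M`-self-concordant-like if along every line
`t ↦ f (x + t • u)` the third derivative is bounded by `M * φ''(t) * ‖u‖`. -/
def SCLike {E : Type*} [NormedAddCommGroup E] [InnerProductSpace ℝ E]
    (M : ℝ) (f : E → ℝ) : Prop :=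
  ContDiff ℝ 3 f ∧ ConvexOn ℝ Set.univ f ∧
    ∀ x u : E, ∀ t : ℝ,
      |deriv^[3] (fun s : ℝ => f (x + s • u)) t| ≤
        M * deriv^[2] (fun s : ℝ => f (x + s • u)) t * ‖u‖

/-- The Hessian quadratic form `⟨∇²f(x) u, u⟩` of `f` at `x`. -/
noncomputable def hessQ {E : Type*} [NormedAddCommGroup E] [InnerProductSpace ℝ E]
    (f : E → ℝ) (x u : E) : ℝ :=
  iteratedFDeriv ℝ 2 f x ![u, u]

/-- The local norm `‖u‖_x := ⟨∇²f(x) u, u⟩^{1/2}`. -/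
noncomputable def locNorm {E : Type*} [NormedAddCommGroup E] [InnerProductSpace ℝ E]
    (f : E → ℝ) (x u : E) : ℝ :=
  Real.sqrt (hessQ f x u)

/-- A monotone function has nonnegative derivative. -/
lemma aux_monotone_deriv_nonneg {g : ℝ → ℝ} (hg : Monotone g) {c t : ℝ}
    (h : HasDerivAt g c t) : 0 ≤ c := by
  have h' : HasDerivWithinAt g c (Set.Ioi t) t := h.hasDerivWithinAt
  rw [hasDerivWithinAt_iff_tendsto_slope,
    Set.diff_singleton_eq_self (by simp : t ∉ Set.Ioi t)] at h'
  refine ge_of_tendsto h' ?_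
  filter_upwards [self_mem_nhdsWithin] with z hz
  have hz1 : t < z := hz
  rw [slope_def_field]
  have h1 : 0 ≤ g z - g t := sub_nonneg.2 (hg hz1.le)
  have hpos : 0 < z - t := sub_pos.2 hz1
  exact div_nonneg h1 hpos.le

/-- Chain rule: second derivative along a line equals the Hessian quadratic form. -/
lemma aux_deriv2_line {E : Type*} [NormedAddCommGroup E] [InnerProductSpace ℝ E]
    {f : E → ℝ} (hf : ContDiff ℝ 3 f) (x u : E) (t : ℝ) :
    deriv^[2] (fun s : ℝ => f (x + s • u)) t
      = fderiv ℝ (fderiv ℝ f) (x + t • u) u u := by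
  set γ : ℝ → E := fun s => x + s • u with hγdef
  have hγ : ∀ s : ℝ, HasDerivAt γ u s := by
    intro s
    simpa [hγdef] using ((hasDerivAt_id s).smul_const u).const_add x
  have hfd : Differentiable ℝ f := hf.differentiable (by norm_num)
  have hstep1 : deriv (fun s : ℝ => f (x + s • u)) = fun s => fderiv ℝ f (γ s) u := by
    funext s
    exact ((hfd (γ s)).hasFDerivAt.comp_hasDerivAt s (hγ s)).deriv
  have hff : ContDiff ℝ 2 (fderiv ℝ f) := hf.fderiv_right (by norm_num)
  have hffd : Differentiable ℝ (fderiv ℝ f) := hff.differentiable (by norm_num)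
  have hψ : ∀ z : E, HasFDerivAt (fun z => fderiv ℝ f z u)
      ((ContinuousLinearMap.apply ℝ ℝ u).comp (fderiv ℝ (fderiv ℝ f) z)) z := by
    intro z
    exact (ContinuousLinearMap.apply ℝ ℝ u).hasFDerivAt.comp z (hffd z).hasFDerivAt
  have hstep2 : HasDerivAt (fun s => fderiv ℝ f (γ s) u)
      (fderiv ℝ (fderiv ℝ f) (γ t) u u) t := by
    exact (hψ (γ t)).comp_hasDerivAt t (hγ t)
  show deriv (deriv (fun s : ℝ => f (x + s • u))) t = _
  rw [hstep1]
  exact hstep2.deriv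

/-- Bounds on the local norm: `e^{-r/2) ‖y-x‖_x ≤ ‖y-x‖_y ≤ e^{r/2} ‖y-x‖_x`
with `r = M_f ‖y-x‖₂`. -/
theorem sclike_local_norm_bound {E : Type*} [NormedAddCommGroup E] [InnerProductSpace ℝ E]
    (M : ℝ) (hM : 0 < M) (f : E → ℝ) (hf : SCLike M f) (x y : E) :
    Real.exp (-(M * ‖y - x‖) / 2) * locNorm f x (y - x) ≤ locNorm f y (y - x) ∧
      locNorm f y (y - x) ≤ Real.exp (M * ‖y - x‖ / 2) * locNorm f x (y - x) := by
  obtain ⟨hf3, hconv, hineq⟩ := hf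
  set u : E := y - x with hu
  set r : ℝ := M * ‖u‖ with hr
  have hr0 : 0 ≤ r := mul_nonneg hM.le (norm_nonneg _)
  set φ : ℝ → ℝ := fun s : ℝ => f (x + s • u) with hφdef
  set g : ℝ → ℝ := deriv^[2] φ with hgdef
  -- smoothness of φ
  have hgam : ContDiff ℝ 3 (fun s : ℝ => x + s • u) :=
    contDiff_const.add (contDiff_id.smul contDiff_const)
  have hφ : ContDiff ℝ 3 φ := hf3.comp hgam
  have hφ' : ContDiff ℝ 2 (deriv φ) := by
    have := ContDiff.iterate_deriv' 2 1 (f := φ) (by exact_mod_cast hφ)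
    simpa using this
  have hg1 : ContDiff ℝ 1 g := by
    have := ContDiff.iterate_deriv' 1 2 (f := φ) (by exact_mod_cast hφ)
    simpa [hgdef] using this
  have hgderiv : ∀ t, HasDerivAt g (deriv^[3] φ t) t := by
    intro t
    have h1 : HasDerivAt g (deriv g t) t :=
      ((hg1.differentiable one_ne_zero) t).hasDerivAt
    have : deriv^[3] φ t = deriv g t := by
      rw [hgdef, ← Function.iterate_succ_apply' deriv 2 φ]
    rwa [this]
  -- convexity of φ and nonnegativity of g
  have hφconv : ConvexOn ℝ Set.univ φ := by
    have h1 := hconv.comp_affineMap (AffineMap.lineMap x y : ℝ →ᵃ[ℝ] E)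
    have h2 : (f ∘ (AffineMap.lineMap x y : ℝ →ᵃ[ℝ] E)) = φ := by
      funext s
      simp [AffineMap.lineMap_apply, hφdef, hu, add_comm, sub_eq_add_neg]
    rw [h2] at h1
    simpa using h1
  have hmono : Monotone (deriv φ) := by
    have := hφconv.monotoneOn_deriv (fun z _ =>
      (hφ.differentiable (by norm_num)).differentiableAt)
    exact monotoneOn_univ.mp this
  have hgnn : ∀ t, 0 ≤ g t := by
    intro t
    have hd : HasDerivAt (deriv φ) (deriv (deriv φ) t) t :=
      ((hφ'.differentiable (by norm_num)) t).hasDerivAt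
    have : g t = deriv (deriv φ) t := rfl
    rw [this]
    exact aux_monotone_deriv_nonneg hmono hd
  -- the differential inequality
  have hbound : ∀ t, |deriv^[3] φ t| ≤ r * g t := by
    intro t
    have := hineq x u t
    calc |deriv^[3] φ t| ≤ M * deriv^[2] φ t * ‖u‖ := this
      _ = r * g t := by rw [hgdef, hr]; ring
  have hgcont : ∀ s : Set ℝ, ContinuousOn g s := fun s =>
    ((hg1.differentiable one_ne_zero).continuous).continuousOn
  -- Grönwall, forward
  have fwd : g 1 ≤ g 0 * Real.exp r := by
    have := norm_le_gronwallBound_of_norm_deriv_right_le (f := g)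
      (f' := fun t => deriv^[3] φ t) (δ := ‖g 0‖) (K := r) (ε := 0) (a := 0) (b := 1)
      (hgcont _) (fun s _ => (hgderiv s).hasDerivWithinAt) le_rfl
      (fun s _ => by
        rw [Real.norm_eq_abs, Real.norm_eq_abs, abs_of_nonneg (hgnn s)]
        simpa using hbound s) 1 (by norm_num)
    rw [gronwallBound_ε0] at this
    calc g 1 ≤ ‖g 1‖ := le_abs_self _
      _ ≤ ‖g 0‖ * Real.exp (r * (1 - 0)) := this
      _ = g 0 * Real.exp r := by
        rw [Real.norm_eq_abs, abs_of_nonneg (hgnn 0)]; norm_num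
  -- Grönwall, backward
  have bwd : g 0 ≤ g 1 * Real.exp r := by
    have hrev : ∀ t : ℝ, HasDerivAt (fun s => g (1 - s)) (-(deriv^[3] φ (1 - t))) t := by
      intro t
      have hinner : HasDerivAt (fun s : ℝ => 1 - s) (-1) t := by
        simpa using (hasDerivAt_id t).const_sub 1
      have := (hgderiv (1 - t)).comp t hinner
      rw [show deriv^[3] φ (1 - t) * -1 = -(deriv^[3] φ (1 - t)) by ring] at this
      exact this
    have := norm_le_gronwallBound_of_norm_deriv_right_le (f := fun s => g (1 - s))
      (f' := fun t => -(deriv^[3] φ (1 - t))) (δ := ‖g 1‖) (K := r) (ε := 0) (a := 0) (b := 1)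
      (((hg1.differentiable one_ne_zero).continuous.comp (by continuity)).continuousOn)
      (fun s _ => (hrev s).hasDerivWithinAt) (by norm_num)
      (fun s _ => by
        rw [Real.norm_eq_abs, Real.norm_eq_abs, abs_neg, abs_of_nonneg (hgnn (1 - s))]
        simpa using hbound (1 - s)) 1 (by norm_num)
    rw [gronwallBound_ε0] at this
    calc g 0 ≤ ‖g 0‖ := le_abs_self _
      _ = ‖g (1 - 1)‖ := by norm_num
      _ ≤ ‖g 1‖ * Real.exp (r * (1 - 0)) := this
      _ = g 1 * Real.exp r := by
        rw [Real.norm_eq_abs, abs_of_nonneg (hgnn 1)]; norm_num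
  -- identify endpoints with hessQ
  have hq : ∀ t : ℝ, g t = fderiv ℝ (fderiv ℝ f) (x + t • u) u u := fun t =>
    aux_deriv2_line hf3 x u t
  have hhx : hessQ f x u = g 0 := by
    rw [hq 0, hessQ, iteratedFDeriv_two_apply]
    simp
  have hhy : hessQ f y u = g 1 := by
    rw [hq 1, hessQ, iteratedFDeriv_two_apply]
    simp [hu]
  -- convert to sqrt bounds
  rw [locNorm, locNorm, hhx, hhy]
  have hexp : Real.sqrt (Real.exp r) = Real.exp (r / 2) := (Real.exp_half r).symm
  constructor
  · -- lower bound
    have h1 : g 0 * Real.exp (-r) ≤ g 1 := by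
      calc g 0 * Real.exp (-r) ≤ (g 1 * Real.exp r) * Real.exp (-r) :=
            mul_le_mul_of_nonneg_right bwd (Real.exp_pos (-r)).le
        _ = g 1 := by rw [mul_assoc, ← Real.exp_add]; simp
    have h2 := Real.sqrt_le_sqrt h1
    rw [Real.sqrt_mul (hgnn 0)] at h2
    have e1 : Real.exp (-(M * ‖y - x‖) / 2) = Real.sqrt (Real.exp (-r)) := by
      rw [← Real.exp_half (-r)]
    calc Real.exp (-(M * ‖y - x‖) / 2) * Real.sqrt (g 0)
        = Real.sqrt (g 0) * Real.sqrt (Real.exp (-r)) := by rw [e1, mul_comm]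
      _ ≤ Real.sqrt (g 1) := h2
  · -- upper bound
    have := Real.sqrt_le_sqrt fwd
    rw [Real.sqrt_mul (hgnn 0), hexp] at this
    calc Real.sqrt (g 1) ≤ Real.sqrt (g 0) * Real.exp (r / 2) := this
      _ = Real.exp (M * ‖y - x‖ / 2) * Real.sqrt (g 0) := by rw [hr, hu, mul_comm]
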